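/- Let M ≥ 1. For every λ ∈ Λ_{Q,M}, every k ∈ {1,2}, and every point s ∈ F_{Q,M}, the C-functions labelled by the Γ-images of λ coincide with the original: Φ_{γ_kλ}(s) = Φ_λ(s). -/

import Mathlib

open Finset

/-- The point set `F_{P,M}`: triples of nonnegative integers summing to `M`. -/
def FPM (M : ℕ) : Finset (ℕ × ℕ × ℕ) :=
  (Finset.range (M+1) ×ˢ Finset.range (M+1) ×ˢ Finset.range (M+1)).filter
    (fun s => s.1 + s.2.1 + s.2.2 = M)

/-- The point set `F_{Q,M}`: triples of `F_{P,M}` with `s1 + 2 s2 ≡ 0 (mod 3)`. -/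
def FQM (M : ℕ) : Finset (ℕ × ℕ × ℕ) :=
  (FPM M).filter (fun s => (s.2.1 + 2 * s.2.2) % 3 = 0)

/-- The honeycomb point set `H_M = F_{P,M} \ F_{Q,M}`. -/
def HM (M : ℕ) : Finset (ℕ × ℕ × ℕ) := FPM M \ FQM M

/-- The interior point set `F̃_{P,M}`: triples of strictly positive integers summing to `M`. -/
def FPMint (M : ℕ) : Finset (ℕ × ℕ × ℕ) :=
  (FPM M).filter (fun s => 0 < s.1 ∧ 0 < s.2.1 ∧ 0 < s.2.2)

/-- The interior point set `F̃_{Q,M}`. -/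
def FQMint (M : ℕ) : Finset (ℕ × ℕ × ℕ) :=
  (FPMint M).filter (fun s => (s.2.1 + 2 * s.2.2) % 3 = 0)

/-- The interior honeycomb point set `H̃_M = F̃_{P,M} \ F̃_{Q,M}`. -/
def HMint (M : ℕ) : Finset (ℕ × ℕ × ℕ) := FPMint M \ FQMint M

/-- The weight set `L_M ⊆ Λ_{Q,M}`. -/
def LM (M : ℕ) : Finset (ℕ × ℕ × ℕ) :=
  (FPM M).filter (fun l => (l.2.1 < l.1 ∧ l.2.2 < l.1) ∨ (l.1 = l.2.1 ∧ l.2.2 < l.1))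

/-- The interior weight set `L̃_M`: elements of `L_M` with all coordinates positive. -/
def LMint (M : ℕ) : Finset (ℕ × ℕ × ℕ) :=
  (LM M).filter (fun l => 0 < l.1 ∧ 0 < l.2.1 ∧ 0 < l.2.2)

/-- A triple `s ∈ F_{P,M}` is identified with the point `(s1/M, s2/M)`. -/
noncomputable def pt (M : ℕ) (s : ℕ × ℕ × ℕ) : ℝ × ℝ :=
  ((s.2.1 : ℝ) / M, (s.2.2 : ℝ) / M)

/-- The Weyl group orbit of the weight `λ` (ordered list, in `ω`-coordinates). -/
def orbit (l : ℕ × ℕ × ℕ) : List (ℤ × ℤ) :=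
  [(2*(l.2.1:ℤ)+l.2.2, (l.2.1:ℤ)+2*l.2.2),
   (-(l.2.1:ℤ)+l.2.2, (l.2.1:ℤ)+2*l.2.2),
   (-(l.2.1:ℤ)-2*l.2.2, (l.2.1:ℤ)-l.2.2),
   (-(l.2.1:ℤ)-2*l.2.2, -2*(l.2.1:ℤ)-l.2.2),
   (-(l.2.1:ℤ)+l.2.2, -2*(l.2.1:ℤ)-l.2.2),
   (2*(l.2.1:ℤ)+l.2.2, (l.2.1:ℤ)-l.2.2)]

/-- The signs `(+,−,+,−,+,−)` attached to the six orbit points for `S`-functions. -/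
def orbitSigns : List ℤ := [1, -1, 1, -1, 1, -1]

/-- The Weyl orbit `C`-function `Φ_λ` of `A₂`. -/
noncomputable def PhiC (l : ℕ × ℕ × ℕ) (x : ℝ × ℝ) : ℂ :=
  ((orbit l).map (fun p =>
    Complex.exp (2 * Real.pi * Complex.I / 3 * ((p.1 : ℂ) * (x.1 : ℂ) + (p.2 : ℂ) * (x.2 : ℂ))))).sum

/-- The Weyl orbit `S`-function `φ_λ` of `A₂`. -/
noncomputable def PhiS (l : ℕ × ℕ × ℕ) (x : ℝ × ℝ) : ℂ :=
  ((orbitSigns.zip (orbit l)).map (fun p => (p.1 : ℂ) *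
    Complex.exp (2 * Real.pi * Complex.I / 3 * ((p.2.1 : ℂ) * (x.1 : ℂ) + (p.2.2 : ℂ) * (x.2 : ℂ))))).sum

/-- The Hartley kernel `cas t = cos t + sin t`. -/
noncomputable def cas (t : ℝ) : ℝ := Real.cos t + Real.sin t

/-- The Hartley `C`-function `ζ¹_λ` of `A₂`. -/
noncomputable def zetaC (l : ℕ × ℕ × ℕ) (x : ℝ × ℝ) : ℝ :=
  ((orbit l).map (fun p => cas (2 * Real.pi / 3 * ((p.1 : ℝ) * x.1 + (p.2 : ℝ) * x.2)))).sum

/-- The Hartley `S`-function `ζ^e_λ` of `A₂`. -/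
noncomputable def zetaS (l : ℕ × ℕ × ℕ) (x : ℝ × ℝ) : ℝ :=
  ((orbitSigns.zip (orbit l)).map (fun p => (p.1 : ℝ) *
    cas (2 * Real.pi / 3 * ((p.2.1 : ℝ) * x.1 + (p.2.2 : ℝ) * x.2)))).sum

/-- The number of zero entries of a triple. -/
def zeroCount (s : ℕ × ℕ × ℕ) : ℕ :=
  (if s.1 = 0 then 1 else 0) + (if s.2.1 = 0 then 1 else 0) + (if s.2.2 = 0 then 1 else 0)

/-- The discrete function `ε`: values `6, 3, 1` for zero, one, two zero entries. -/
def epsF (s : ℕ × ℕ × ℕ) : ℕ :=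
  if zeroCount s = 0 then 6 else if zeroCount s = 1 then 3 else 1

/-- The discrete function `h_M`: values `1, 2, 6` for zero, one, two zero entries. -/
def hMF (l : ℕ × ℕ × ℕ) : ℕ :=
  if zeroCount l = 0 then 1 else if zeroCount l = 1 then 2 else 6

/-- The elements `γ₀ = id`, `γ₁`, `γ₂` of `Γ_M` acting as cyclic permutations of Kac
coordinates: `γ₁[λ0,λ1,λ2] = [λ2,λ0,λ1]`, `γ₂[λ0,λ1,λ2] = [λ1,λ2,λ0]`. -/
def gam (k : Fin 3) (l : ℕ × ℕ × ℕ) : ℕ × ℕ × ℕ :=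
  if k = 0 then l else if k = 1 then (l.2.2, l.1, l.2.1) else (l.2.1, l.2.2, l.1)

/-- The normalization function `μ` of a triple of extension coefficients. -/
noncomputable def muNorm (a b c : ℂ) : ℝ :=
  ‖a‖ ^ 2 + ‖b‖ ^ 2 + ‖c‖ ^ 2
    - (a * starRingEnd ℂ b + a * starRingEnd ℂ c + b * starRingEnd ℂ c).re

/-- The intertwining function `β` of two triples of extension coefficients. -/
noncomputable def betaFun (a b c a' b' c' : ℂ) : ℂ :=
  2 * (a * starRingEnd ℂ a' + b * starRingEnd ℂ b' + c * starRingEnd ℂ c')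
    - a * (starRingEnd ℂ b' + starRingEnd ℂ c')
    - b * (starRingEnd ℂ a' + starRingEnd ℂ c')
    - c * (starRingEnd ℂ a' + starRingEnd ℂ b')

/-- The extended `C`-function `Φ^t_λ` with extension coefficients `μ0, μ1, μ2`. -/
noncomputable def PhiCExt (μ0 μ1 μ2 : ℂ) (l : ℕ × ℕ × ℕ) (x : ℝ × ℝ) : ℂ :=
  μ0 * PhiC l x + μ1 * PhiC (gam 1 l) x + μ2 * PhiC (gam 2 l) x

/-- The extended `S`-function `φ^t_λ` with extension coefficients `μ0, μ1, μ2`. -/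
noncomputable def PhiSExt (μ0 μ1 μ2 : ℂ) (l : ℕ × ℕ × ℕ) (x : ℝ × ℝ) : ℂ :=
  μ0 * PhiS l x + μ1 * PhiS (gam 1 l) x + μ2 * PhiS (gam 2 l) x

/-- The extended Hartley `C`-function `ζ^{1,t}_λ` with extension coefficients `μ0, μ1, μ2`. -/
noncomputable def zetaCExt (μ0 μ1 μ2 : ℂ) (l : ℕ × ℕ × ℕ) (x : ℝ × ℝ) : ℂ :=
  μ0 * (zetaC l x : ℂ) + μ1 * (zetaC (gam 1 l) x : ℂ) + μ2 * (zetaC (gam 2 l) x : ℂ)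

/-- The extended Hartley `S`-function `ζ^{e,t}_λ` with extension coefficients `μ0, μ1, μ2`. -/
noncomputable def zetaSExt (μ0 μ1 μ2 : ℂ) (l : ℕ × ℕ × ℕ) (x : ℝ × ℝ) : ℂ :=
  μ0 * (zetaS l x : ℂ) + μ1 * (zetaS (gam 1 l) x : ℂ) + μ2 * (zetaS (gam 2 l) x : ℂ)


noncomputable def Eterm (x : ℝ × ℝ) (a b : ℤ) : ℂ :=
  Complex.exp (2 * Real.pi * Complex.I / 3 * ((a : ℂ) * (x.1 : ℂ) + (b : ℂ) * (x.2 : ℂ)))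

lemma Eterm_congr (M : ℕ) (hM : 1 ≤ M) (s1 s2 : ℕ) (a b a' b' n : ℤ)
    (h : (a' - a) * s1 + (b' - b) * s2 = 3 * (M:ℤ) * n) :
    Eterm ((s1:ℝ)/M, (s2:ℝ)/M) a' b' = Eterm ((s1:ℝ)/M, (s2:ℝ)/M) a b := by
  have hM0 : (M:ℂ) ≠ 0 := Nat.cast_ne_zero.mpr (by omega)
  have hc : ((a':ℂ) - a) * s1 + ((b':ℂ) - b) * s2 = 3 * M * n := by exact_mod_cast h
  unfold Eterm
  have key : 2 * (Real.pi:ℂ) * Complex.I / 3 * ((a' : ℂ) * (((s1:ℝ)/M : ℝ):ℂ) + (b' : ℂ) * (((s2:ℝ)/M : ℝ):ℂ))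
      = 2 * (Real.pi:ℂ) * Complex.I / 3 * ((a : ℂ) * (((s1:ℝ)/M : ℝ):ℂ) + (b : ℂ) * (((s2:ℝ)/M : ℝ):ℂ))
        + n * (2 * (Real.pi:ℂ) * Complex.I) := by
    push_cast
    field_simp
    linear_combination hc
  simp only [key]
  rw [Complex.exp_add, Complex.exp_int_mul_two_pi_mul_I, mul_one]

lemma PhiC_eqE (l : ℕ × ℕ × ℕ) (x : ℝ × ℝ) :
    PhiC l x =
      Eterm x (2*l.2.1+l.2.2) (l.2.1+2*l.2.2) + Eterm x (-l.2.1+l.2.2) (l.2.1+2*l.2.2)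
      + Eterm x (-l.2.1-2*l.2.2) (l.2.1-l.2.2) + Eterm x (-l.2.1-2*l.2.2) (-2*l.2.1-l.2.2)
      + Eterm x (-l.2.1+l.2.2) (-2*l.2.1-l.2.2) + Eterm x (2*l.2.1+l.2.2) (l.2.1-l.2.2) := by
  simp [PhiC, orbit, Eterm]
  ring

/-- on points of `F_{Q,M}`, the `C`-functions labelled by the `Γ`-images of
a weight coincide with the original one. -/
theorem C_gamma_invariance_FQM (M : ℕ) (hM : 1 ≤ M)
    (lam : ℕ × ℕ × ℕ) (hl : lam ∈ FPM M) (k : Fin 3) (hk : k = 1 ∨ k = 2)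
    (s : ℕ × ℕ × ℕ) (hs : s ∈ FQM M) :
    PhiC (gam k lam) (pt M s) = PhiC lam (pt M s) := by
  simp only [FQM, FPM, Finset.mem_filter] at hl hs
  obtain ⟨⟨-, hssum⟩, h3⟩ := hs
  obtain ⟨-, hlsum⟩ := hl
  obtain ⟨t, ht⟩ : ∃ t, s.2.1 + 2 * s.2.2 = 3 * t := ⟨(s.2.1 + 2*s.2.2)/3, by omega⟩
  obtain ⟨l0, l1, l2⟩ := lam
  obtain ⟨s0, s1, s2⟩ := s
  simp only at hlsum hssum ht
  have hL : (l0:ℤ) + l1 + l2 = M := by exact_mod_cast hlsum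
  have hT : (s1:ℤ) + 2*s2 = 3*t := by exact_mod_cast ht
  have hpt : pt M (s0, s1, s2) = ((s1:ℝ)/M, (s2:ℝ)/M) := rfl
  set x : ℝ × ℝ := ((s1:ℝ)/M, (s2:ℝ)/M) with hx
  rcases hk with rfl | rfl
  · have hg : gam 1 (l0, l1, l2) = (l2, l0, l1) := rfl
    rw [hg, hpt, PhiC_eqE, PhiC_eqE]
    simp only
    have h1 := Eterm_congr M hM s1 s2 (-(l1:ℤ)-2*l2) ((l1:ℤ)-l2) (2*(l0:ℤ)+l1) ((l0:ℤ)+2*l1)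
      (2*t - s2) (by linear_combination (2*(s1:ℤ)+s2)*hL + 2*(M:ℤ)*hT)
    have h2 := Eterm_congr M hM s1 s2 (2*(l1:ℤ)+l2) ((l1:ℤ)-l2) (-(l0:ℤ)+l1) ((l0:ℤ)+2*l1)
      ((s2:ℤ)-t) (by linear_combination (-(s1:ℤ)+s2)*hL - (M:ℤ)*hT)
    have h3' := Eterm_congr M hM s1 s2 (-(l1:ℤ)+l2) (-2*(l1:ℤ)-l2) (-(l0:ℤ)-2*l1) ((l0:ℤ)-l1)
      ((s2:ℤ)-t) (by linear_combination (-(s1:ℤ)+s2)*hL - (M:ℤ)*hT)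
    have h4 := Eterm_congr M hM s1 s2 (-(l1:ℤ)+l2) ((l1:ℤ)+2*l2) (-(l0:ℤ)-2*l1) (-2*(l0:ℤ)-l1)
      (-(t:ℤ)) (by linear_combination (-(s1:ℤ)-2*s2)*hL - (M:ℤ)*hT)
    have h5 := Eterm_congr M hM s1 s2 (2*(l1:ℤ)+l2) ((l1:ℤ)+2*l2) (-(l0:ℤ)+l1) (-2*(l0:ℤ)-l1)
      (-(t:ℤ)) (by linear_combination (-(s1:ℤ)-2*s2)*hL - (M:ℤ)*hT)
    have h6 := Eterm_congr M hM s1 s2 (-(l1:ℤ)-2*l2) (-2*(l1:ℤ)-l2) (2*(l0:ℤ)+l1) ((l0:ℤ)-l1)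
      (2*t - s2) (by linear_combination (2*(s1:ℤ)+s2)*hL + 2*(M:ℤ)*hT)
    rw [h1, h2, h3', h4, h5, h6]
    ring
  · have hg : gam 2 (l0, l1, l2) = (l1, l2, l0) := rfl
    rw [hg, hpt, PhiC_eqE, PhiC_eqE]
    simp only
    have h1 := Eterm_congr M hM s1 s2 (-(l1:ℤ)+l2) (-2*(l1:ℤ)-l2) (2*(l2:ℤ)+l0) ((l2:ℤ)+2*l0)
      (t:ℤ) (by linear_combination ((s1:ℤ)+2*s2)*hL + (M:ℤ)*hT)
    have h2 := Eterm_congr M hM s1 s2 (-(l1:ℤ)-2*l2) (-2*(l1:ℤ)-l2) (-(l2:ℤ)+l0) ((l2:ℤ)+2*l0)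
      (t:ℤ) (by linear_combination ((s1:ℤ)+2*s2)*hL + (M:ℤ)*hT)
    have h3' := Eterm_congr M hM s1 s2 (2*(l1:ℤ)+l2) ((l1:ℤ)+2*l2) (-(l2:ℤ)-2*l0) ((l2:ℤ)-l0)
      ((s2:ℤ)-2*t) (by linear_combination (-2*(s1:ℤ)-s2)*hL - 2*(M:ℤ)*hT)
    have h4 := Eterm_congr M hM s1 s2 (2*(l1:ℤ)+l2) ((l1:ℤ)-l2) (-(l2:ℤ)-2*l0) (-2*(l2:ℤ)-l0)
      ((s2:ℤ)-2*t) (by linear_combination (-2*(s1:ℤ)-s2)*hL - 2*(M:ℤ)*hT)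
    have h5 := Eterm_congr M hM s1 s2 (-(l1:ℤ)-2*l2) ((l1:ℤ)-l2) (-(l2:ℤ)+l0) (-2*(l2:ℤ)-l0)
      ((t:ℤ)-s2) (by linear_combination ((s1:ℤ)-s2)*hL + (M:ℤ)*hT)
    have h6 := Eterm_congr M hM s1 s2 (-(l1:ℤ)+l2) ((l1:ℤ)+2*l2) (2*(l2:ℤ)+l0) ((l2:ℤ)-l0)
      ((t:ℤ)-s2) (by linear_combination ((s1:ℤ)-s2)*hL + (M:ℤ)*hT)
    rw [h1, h2, h3', h4, h5, h6]
    ring
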